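/- Let α, β : ℝ → ℝ² be differentiable on nondegenerate intervals I, J with timelike derivative at every point. Let t₁, t₂ ∈ I and s₁, s₂ ∈ J be such that β(s₁) − α(t₁) and β(s₂) − α(t₂) are spacelike vectors, and such that β(s₁) − α(t₁) and α(t₂) − β(s₂) have the same spatial direction, i.e. (β(s₁)₂ − α(t₁)₂)·(α(t₂)₂ − β(s₂)₂) > 0. Then there exists t strictly between t₁ and t₂ such that α(t) lies in the image β(J). -/

import Mathlib

open Set

/-- From a strict "1-Lipschitz on increase" hypothesis, get the symmetric non-strict
Lipschitz bound. -/
private lemma lip_le_of_slip {A : Set ℝ} {f : ℝ → ℝ}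
    (hf : ∀ u ∈ A, ∀ u' ∈ A, u < u' → |f u' - f u| < u' - u) :
    ∀ u ∈ A, ∀ u' ∈ A, |f u - f u'| ≤ |u - u'| := by
  intro u hu u' hu'
  rcases lt_trichotomy u u' with h | h | h
  · have h1 := hf u hu u' hu' h
    rw [abs_sub_comm (f u), abs_sub_comm u, abs_of_pos (by linarith : (0:ℝ) < u' - u)]
    linarith
  · rw [h]; simp
  · have h1 := hf u' hu' u hu h
    rw [abs_of_pos (by linarith : (0:ℝ) < u - u')]
    linarith

/-- Abstract crossing lemma for two strictly 1-Lipschitz graphs. -/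
private lemma graph_cross (A B : Set ℝ) (hA : A.OrdConnected) (hB : B.OrdConnected)
    (f g : ℝ → ℝ)
    (hf : ∀ u ∈ A, ∀ u' ∈ A, u < u' → |f u' - f u| < u' - u)
    (hg : ∀ u ∈ B, ∀ u' ∈ B, u < u' → |g u' - g u| < u' - u)
    {pu qu u₁ v₁ : ℝ} (hpuA : pu ∈ A) (hquA : qu ∈ A) (hu₁B : u₁ ∈ B) (hv₁B : v₁ ∈ B)
    (hpq : pu < qu)
    (S1 : |u₁ - pu| < g u₁ - f pu)
    (S2 : |v₁ - qu| < f qu - g v₁) :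
    ∃ w, w ∈ A ∧ w ∈ B ∧ pu < w ∧ w < qu ∧ f w = g w := by
  have hfle := lip_le_of_slip hf
  have hgle := lip_le_of_slip hg
  have hsub : Icc pu qu ⊆ A := hA.out hpuA hquA
  -- F1 : the lower-left point is below the graph of g at time pu
  have F1 : pu ∈ B → f pu < g pu := by
    intro hpuB
    have h1 := hgle u₁ hu₁B pu hpuB
    have h2 := le_abs_self (g u₁ - g pu)
    linarith
  -- F2 : the upper-right point is above the graph of g at time qu
  have F2 : qu ∈ B → g qu < f qu := by
    intro hquB
    have h1 := hgle qu hquB v₁ hv₁B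
    have h2 := le_abs_self (g qu - g v₁)
    have h3 : |qu - v₁| = |v₁ - qu| := abs_sub_comm _ _
    linarith
  -- F3 : B cannot lie entirely to the left of pu
  have F3 : u₁ < pu → v₁ < pu → False := by
    intro h1 h2
    have l1 : pu - u₁ ≤ |u₁ - pu| := by rw [abs_sub_comm]; exact le_abs_self _
    have l2 : qu - v₁ ≤ |v₁ - qu| := by rw [abs_sub_comm]; exact le_abs_self _
    have l3 := hf pu hpuA qu hquA hpq
    have l3' := le_abs_self (f qu - f pu)
    have l4 := hgle u₁ hu₁B v₁ hv₁B
    have l4' := le_abs_self (g u₁ - g v₁)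
    have l5 : |u₁ - v₁| ≤ |u₁ - pu| + |pu - v₁| := abs_sub_le _ _ _
    have l6 : |u₁ - pu| = pu - u₁ := by
      rw [abs_sub_comm]; exact abs_of_pos (by linarith)
    have l7 : |pu - v₁| = pu - v₁ := abs_of_pos (by linarith)
    linarith
  -- F4 : B cannot lie entirely to the right of qu
  have F4 : qu < u₁ → qu < v₁ → False := by
    intro h3 h4
    have l1 : u₁ - pu ≤ |u₁ - pu| := le_abs_self _
    have l2 : v₁ - qu ≤ |v₁ - qu| := le_abs_self _
    have l3 := hf pu hpuA qu hquA hpq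
    have l3' := le_abs_self (f qu - f pu)
    have l4 := hgle u₁ hu₁B v₁ hv₁B
    have l4' := le_abs_self (g u₁ - g v₁)
    have l5 : |u₁ - v₁| ≤ |u₁ - qu| + |qu - v₁| := abs_sub_le _ _ _
    have l6 : |u₁ - qu| = u₁ - qu := abs_of_pos (by linarith)
    have l7 : |qu - v₁| = -(qu - v₁) := abs_of_neg (by linarith)
    linarith
  -- a point where f < g
  have hm₁ : ∃ m, m ∈ B ∧ pu ≤ m ∧ m < qu ∧ f m < g m := by
    by_cases hpuB : pu ∈ B
    · exact ⟨pu, hpuB, le_refl _, hpq, F1 hpuB⟩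
    · have hne1 : u₁ ≠ pu := fun h => hpuB (h ▸ hu₁B)
      have hne2 : v₁ ≠ pu := fun h => hpuB (h ▸ hv₁B)
      have hpu₁ : pu < u₁ := by
        rcases lt_or_gt_of_ne hne1 with h1 | h1
        · rcases lt_or_gt_of_ne hne2 with h2 | h2
          · exact absurd (F3 h1 h2) not_false
          · exact absurd (hB.out hu₁B hv₁B ⟨le_of_lt h1, le_of_lt h2⟩) hpuB
        · exact h1
      have hu₁qu : u₁ < qu := by
        by_cases hquB : qu ∈ B
        · by_contra hle
          push_neg at hle
          have l1 : u₁ - pu ≤ |u₁ - pu| := le_abs_self _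
          have l2 := hgle u₁ hu₁B qu hquB
          have l2' := le_abs_self (g u₁ - g qu)
          have l2'' : |u₁ - qu| = u₁ - qu := abs_of_nonneg (by linarith)
          have l3 := hf pu hpuA qu hquA hpq
          have l3' := le_abs_self (f qu - f pu)
          have l4 := F2 hquB
          linarith
        · have hne3 : u₁ ≠ qu := fun h => hquB (h ▸ hu₁B)
          rcases lt_or_gt_of_ne hne3 with h3 | h3
          · exact h3
          · have hne4 : v₁ ≠ qu := fun h => hquB (h ▸ hv₁B)
            rcases lt_or_gt_of_ne hne4 with h4 | h4
            · exact absurd (hB.out hv₁B hu₁B ⟨le_of_lt h4, le_of_lt h3⟩) hquB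
            · exact absurd (F4 h3 h4) not_false
      have hu₁A : u₁ ∈ A := hsub ⟨le_of_lt hpu₁, le_of_lt hu₁qu⟩
      refine ⟨u₁, hu₁B, le_of_lt hpu₁, hu₁qu, ?_⟩
      have l1 := hf pu hpuA u₁ hu₁A hpu₁
      have l1' := le_abs_self (f u₁ - f pu)
      have l2 : u₁ - pu ≤ |u₁ - pu| := le_abs_self _
      linarith
  -- a point where g < f
  have hm₂ : ∃ m, m ∈ B ∧ pu < m ∧ m ≤ qu ∧ g m < f m := by
    by_cases hquB : qu ∈ B
    · exact ⟨qu, hquB, hpq, le_refl _, F2 hquB⟩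
    · have hne1 : v₁ ≠ qu := fun h => hquB (h ▸ hv₁B)
      have hne0 : u₁ ≠ qu := fun h => hquB (h ▸ hu₁B)
      have hv₁qu : v₁ < qu := by
        rcases lt_or_gt_of_ne hne1 with h1 | h1
        · exact h1
        · rcases lt_or_gt_of_ne hne0 with h0 | h0
          · exact absurd (hB.out hu₁B hv₁B ⟨le_of_lt h0, le_of_lt h1⟩) hquB
          · exact absurd (F4 h0 h1) not_false
      have hpuv₁ : pu < v₁ := by
        by_cases hpuB : pu ∈ B
        · by_contra hle
          push_neg at hle
          have l1 : qu - v₁ ≤ |v₁ - qu| := by rw [abs_sub_comm]; exact le_abs_self _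
          have l2 := hf pu hpuA qu hquA hpq
          have l2' := le_abs_self (f qu - f pu)
          have l3 := hgle pu hpuB v₁ hv₁B
          have l3' := le_abs_self (g pu - g v₁)
          have l3'' : |pu - v₁| = pu - v₁ := abs_of_nonneg (by linarith)
          have l4 := F1 hpuB
          linarith
        · have hne2 : v₁ ≠ pu := fun h => hpuB (h ▸ hv₁B)
          rcases lt_or_gt_of_ne hne2 with h2 | h2
          · have hne3 : u₁ ≠ pu := fun h => hpuB (h ▸ hu₁B)
            rcases lt_or_gt_of_ne hne3 with h3 | h3
            · exact absurd (F3 h3 h2) not_false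
            · exact absurd (hB.out hv₁B hu₁B ⟨le_of_lt h2, le_of_lt h3⟩) hpuB
          · exact h2
      have hv₁A : v₁ ∈ A := hsub ⟨le_of_lt hpuv₁, le_of_lt hv₁qu⟩
      refine ⟨v₁, hv₁B, hpuv₁, le_of_lt hv₁qu, ?_⟩
      have l1 := hf v₁ hv₁A qu hquA hv₁qu
      have l1' := le_abs_self (f qu - f v₁)
      have l2 : qu - v₁ ≤ |v₁ - qu| := by rw [abs_sub_comm]; exact le_abs_self _
      linarith
  obtain ⟨m₁, hm₁B, hm₁ge, hm₁lt, hfg₁⟩ := hm₁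
  obtain ⟨m₂, hm₂B, hm₂gt, hm₂le, hfg₂⟩ := hm₂
  have hIccB : Icc (min m₁ m₂) (max m₁ m₂) ⊆ B := by
    rcases le_total m₁ m₂ with h | h
    · rw [min_eq_left h, max_eq_right h]; exact hB.out hm₁B hm₂B
    · rw [min_eq_right h, max_eq_left h]; exact hB.out hm₂B hm₁B
  have hIccA : Icc (min m₁ m₂) (max m₁ m₂) ⊆ A := by
    intro x hx
    exact hsub ⟨le_trans (le_min hm₁ge hm₂gt.le) hx.1,
      le_trans hx.2 (max_le hm₁lt.le hm₂le)⟩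
  have hcf : ContinuousOn f (Icc (min m₁ m₂) (max m₁ m₂)) := by
    apply LipschitzOnWith.continuousOn (K := 1)
    rw [lipschitzOnWith_iff_dist_le_mul]
    intro x hx y hy
    rw [Real.dist_eq, Real.dist_eq]
    have := hfle x (hIccA hx) y (hIccA hy)
    simpa using this
  have hcg : ContinuousOn g (Icc (min m₁ m₂) (max m₁ m₂)) := by
    apply LipschitzOnWith.continuousOn (K := 1)
    rw [lipschitzOnWith_iff_dist_le_mul]
    intro x hx y hy
    rw [Real.dist_eq, Real.dist_eq]
    have := hgle x (hIccB hx) y (hIccB hy)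
    simpa using this
  have hcF : ContinuousOn (fun u => g u - f u) (Icc (min m₁ m₂) (max m₁ m₂)) := hcg.sub hcf
  have hne : m₁ ≠ m₂ := by
    intro h; rw [h] at hfg₁; linarith
  rcases lt_or_gt_of_ne hne with hlt | hlt
  · have hmin : min m₁ m₂ = m₁ := min_eq_left hlt.le
    have hmax : max m₁ m₂ = m₂ := max_eq_right hlt.le
    rw [hmin, hmax] at hcF hIccA hIccB
    have key := intermediate_value_Icc' hlt.le hcF
    have h0 : (0:ℝ) ∈ Icc (g m₂ - f m₂) (g m₁ - f m₁) :=
      ⟨by linarith, by linarith⟩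
    obtain ⟨w, hw, hFw⟩ := key h0
    have hw1 : w ≠ m₁ := by
      intro h; rw [h] at hFw; simp only at hFw; linarith
    refine ⟨w, hIccA hw, hIccB hw, ?_, ?_, ?_⟩
    · exact lt_of_le_of_lt hm₁ge (lt_of_le_of_ne hw.1 (Ne.symm hw1))
    · have hw2 : w ≠ m₂ := by
        intro h; rw [h] at hFw; simp only at hFw; linarith
      exact lt_of_lt_of_le (lt_of_le_of_ne hw.2 hw2) hm₂le
    · have : g w - f w = 0 := hFw
      linarith
  · have hmin : min m₁ m₂ = m₂ := min_eq_right hlt.le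
    have hmax : max m₁ m₂ = m₁ := max_eq_left hlt.le
    rw [hmin, hmax] at hcF hIccA hIccB
    have key := intermediate_value_Icc hlt.le hcF
    have h0 : (0:ℝ) ∈ Icc (g m₂ - f m₂) (g m₁ - f m₁) :=
      ⟨by linarith, by linarith⟩
    obtain ⟨w, hw, hFw⟩ := key h0
    refine ⟨w, hIccA hw, hIccB hw, ?_, ?_, ?_⟩
    · exact lt_of_lt_of_le hm₂gt hw.1
    · exact lt_of_le_of_lt hw.2 hm₁lt
    · have : g w - f w = 0 := hFw
      linarith

private lemma param_core (I J : Set ℝ) (α β : ℝ → ℝ × ℝ)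
    (hA : ((fun t => (α t).1) '' I).OrdConnected)
    (hB : ((fun s => (β s).1) '' J).OrdConnected)
    (hαL : ∀ t ∈ I, ∀ t' ∈ I, (α t).1 < (α t').1 → |(α t').2 - (α t).2| < (α t').1 - (α t).1)
    (hβL : ∀ s ∈ J, ∀ s' ∈ J, (β s).1 < (β s').1 → |(β s').2 - (β s).2| < (β s').1 - (β s).1)
    (hαE : ∀ t ∈ I, ∀ t' ∈ I, (α t).1 = (α t').1 → (α t).2 = (α t').2)
    (hβE : ∀ s ∈ J, ∀ s' ∈ J, (β s).1 = (β s').1 → (β s).2 = (β s').2)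
    (t₁ t₂ s₁ s₂ : ℝ) (ht₁ : t₁ ∈ I) (ht₂ : t₂ ∈ I) (hs₁ : s₁ ∈ J) (hs₂ : s₂ ∈ J)
    (hpq : (α t₁).1 < (α t₂).1)
    (S1 : |(β s₁).1 - (α t₁).1| < (β s₁).2 - (α t₁).2)
    (S2 : |(β s₂).1 - (α t₂).1| < (α t₂).2 - (β s₂).2) :
    ∃ t ∈ I, ((α t₁).1 < (α t).1 ∧ (α t).1 < (α t₂).1) ∧ α t ∈ β '' J := by
  classical
  set A := (fun t => (α t).1) '' I with hAdef
  set B := (fun s => (β s).1) '' J with hBdef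
  obtain ⟨f, hfval⟩ : ∃ f : ℝ → ℝ, ∀ t ∈ I, f ((α t).1) = (α t).2 := by
    refine ⟨fun u => if h : u ∈ A then (α ((Set.mem_image _ _ _).mp h).choose).2 else 0, ?_⟩
    intro t ht
    have h : (α t).1 ∈ A := ⟨t, ht, rfl⟩
    simp only [dif_pos h]
    have spec := ((Set.mem_image _ _ _).mp h).choose_spec
    exact hαE _ spec.1 t ht spec.2
  obtain ⟨g, hgval⟩ : ∃ g : ℝ → ℝ, ∀ s ∈ J, g ((β s).1) = (β s).2 := by
    refine ⟨fun u => if h : u ∈ B then (β ((Set.mem_image _ _ _).mp h).choose).2 else 0, ?_⟩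
    intro s hs
    have h : (β s).1 ∈ B := ⟨s, hs, rfl⟩
    simp only [dif_pos h]
    have spec := ((Set.mem_image _ _ _).mp h).choose_spec
    exact hβE _ spec.1 s hs spec.2
  have hf : ∀ u ∈ A, ∀ u' ∈ A, u < u' → |f u' - f u| < u' - u := by
    rintro u ⟨t, ht, rfl⟩ u' ⟨t', ht', rfl⟩ h
    rw [hfval t ht, hfval t' ht']
    exact hαL t ht t' ht' h
  have hg : ∀ u ∈ B, ∀ u' ∈ B, u < u' → |g u' - g u| < u' - u := by
    rintro u ⟨s, hs, rfl⟩ u' ⟨s', hs', rfl⟩ h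
    rw [hgval s hs, hgval s' hs']
    exact hβL s hs s' hs' h
  have hpuA : (α t₁).1 ∈ A := ⟨t₁, ht₁, rfl⟩
  have hquA : (α t₂).1 ∈ A := ⟨t₂, ht₂, rfl⟩
  have hu₁B : (β s₁).1 ∈ B := ⟨s₁, hs₁, rfl⟩
  have hv₁B : (β s₂).1 ∈ B := ⟨s₂, hs₂, rfl⟩
  have S1' : |(β s₁).1 - (α t₁).1| < g ((β s₁).1) - f ((α t₁).1) := by
    rw [hgval s₁ hs₁, hfval t₁ ht₁]; exact S1
  have S2' : |(β s₂).1 - (α t₂).1| < f ((α t₂).1) - g ((β s₂).1) := by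
    rw [hgval s₂ hs₂, hfval t₂ ht₂]; linarith
  obtain ⟨w, hwA, hwB, hw1, hw2, hwfg⟩ :=
    graph_cross A B hA hB f g hf hg hpuA hquA hu₁B hv₁B hpq S1' S2'
  obtain ⟨t, ht, htw0⟩ := hwA
  have htw : (α t).1 = w := htw0
  obtain ⟨s, hs, hsw0⟩ := hwB
  -- dup removed
  have hsw : (β s).1 = w := hsw0
  refine ⟨t, ht, ?_, ⟨s, hs, ?_⟩⟩
  · rw [htw]; exact ⟨hw1, hw2⟩
  · have h1 : (β s).1 = (α t).1 := by rw [hsw, htw]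
    have h2 : (β s).2 = (α t).2 := by
      have e1 : f w = (α t).2 := by rw [← htw]; exact hfval t ht
      have e2 : g w = (β s).2 := by rw [← hsw]; exact hgval s hs
      rw [← e2, ← hwfg, e1]
    exact Prod.ext h1 h2

private def fl (γ : ℝ → ℝ × ℝ) : ℝ → ℝ × ℝ := fun t => ((γ t).1, -(γ t).2)

private lemma fl_L {K : Set ℝ} {γ : ℝ → ℝ × ℝ}
    (h : ∀ t ∈ K, ∀ t' ∈ K, (γ t).1 < (γ t').1 → |(γ t').2 - (γ t).2| < (γ t').1 - (γ t).1) :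
    ∀ t ∈ K, ∀ t' ∈ K, (fl γ t).1 < (fl γ t').1 →
      |(fl γ t').2 - (fl γ t).2| < (fl γ t').1 - (fl γ t).1 := by
  intro t ht t' ht' hlt
  have h1 := h t ht t' ht' hlt
  show |(-(γ t').2) - -(γ t).2| < (γ t').1 - (γ t).1
  rw [show (-(γ t').2) - -(γ t).2 = -((γ t').2 - (γ t).2) by ring, abs_neg]
  exact h1

private lemma fl_E {K : Set ℝ} {γ : ℝ → ℝ × ℝ}
    (h : ∀ t ∈ K, ∀ t' ∈ K, (γ t).1 = (γ t').1 → (γ t).2 = (γ t').2) :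
    ∀ t ∈ K, ∀ t' ∈ K, (fl γ t).1 = (fl γ t').1 → (fl γ t).2 = (fl γ t').2 := by
  intro t ht t' ht' he
  show -(γ t).2 = -(γ t').2
  exact congrArg Neg.neg (h t ht t' ht' he)

private lemma E_of_mono {K : Set ℝ} {γ : ℝ → ℝ × ℝ}
    (h : StrictMonoOn (fun t => (γ t).1) K ∨ StrictAntiOn (fun t => (γ t).1) K) :
    ∀ t ∈ K, ∀ t' ∈ K, (γ t).1 = (γ t').1 → (γ t).2 = (γ t').2 := by
  intro t ht t' ht' he
  have : t = t' := by
    rcases h with hm | hm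
    · exact hm.injOn ht ht' he
    · exact hm.injOn ht ht' he
  rw [this]

private lemma param_lip_le {K : Set ℝ} {γ : ℝ → ℝ × ℝ}
    (hL : ∀ t ∈ K, ∀ t' ∈ K, (γ t).1 < (γ t').1 → |(γ t').2 - (γ t).2| < (γ t').1 - (γ t).1)
    (hE : ∀ t ∈ K, ∀ t' ∈ K, (γ t).1 = (γ t').1 → (γ t).2 = (γ t').2) :
    ∀ t ∈ K, ∀ t' ∈ K, |(γ t).2 - (γ t').2| ≤ |(γ t).1 - (γ t').1| := by
  intro t ht t' ht'
  rcases lt_trichotomy (γ t).1 (γ t').1 with h | h | h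
  · have h1 := hL t ht t' ht' h
    rw [abs_sub_comm ((γ t).2), abs_sub_comm ((γ t).1),
      abs_of_pos (by linarith : (0:ℝ) < (γ t').1 - (γ t).1)]
    linarith
  · rw [hE t ht t' ht' h, h]; simp
  · have h1 := hL t' ht' t ht h
    rw [abs_of_pos (by linarith : (0:ℝ) < (γ t).1 - (γ t').1)]
    linarith

private lemma semi_pos (I J : Set ℝ) (α β : ℝ → ℝ × ℝ)
    (hA : ((fun t => (α t).1) '' I).OrdConnected)
    (hB : ((fun s => (β s).1) '' J).OrdConnected)
    (hαL : ∀ t ∈ I, ∀ t' ∈ I, (α t).1 < (α t').1 → |(α t').2 - (α t).2| < (α t').1 - (α t).1)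
    (hβL : ∀ s ∈ J, ∀ s' ∈ J, (β s).1 < (β s').1 → |(β s').2 - (β s).2| < (β s').1 - (β s).1)
    (hαE : ∀ t ∈ I, ∀ t' ∈ I, (α t).1 = (α t').1 → (α t).2 = (α t').2)
    (hβE : ∀ s ∈ J, ∀ s' ∈ J, (β s).1 = (β s').1 → (β s).2 = (β s').2)
    (hmα : StrictMonoOn (fun t => (α t).1) I ∨ StrictAntiOn (fun t => (α t).1) I)
    (t₁ t₂ s₁ s₂ : ℝ) (ht₁ : t₁ ∈ I) (ht₂ : t₂ ∈ I) (hs₁ : s₁ ∈ J) (hs₂ : s₂ ∈ J)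
    (hpq : (α t₁).1 < (α t₂).1)
    (S1 : |(β s₁).1 - (α t₁).1| < (β s₁).2 - (α t₁).2)
    (S2 : |(β s₂).1 - (α t₂).1| < (α t₂).2 - (β s₂).2) :
    ∃ t ∈ I, ((t₁ < t ∧ t < t₂) ∨ (t₂ < t ∧ t < t₁)) ∧ α t ∈ β '' J := by
  obtain ⟨t, ht, ⟨h1, h2⟩, himg⟩ :=
    param_core I J α β hA hB hαL hβL hαE hβE t₁ t₂ s₁ s₂ ht₁ ht₂ hs₁ hs₂ hpq S1 S2
  refine ⟨t, ht, ?_, himg⟩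
  rcases hmα with hm | hm
  · have key : ∀ a ∈ I, ∀ b ∈ I, (α a).1 < (α b).1 → a < b := by
      intro a ha b hb h
      by_contra hc
      push_neg at hc
      rcases hc.lt_or_eq with h' | h'
      · exact absurd (hm hb ha h') (by simp only; linarith)
      · rw [h'] at h; exact lt_irrefl _ h
    exact Or.inl ⟨key t₁ ht₁ t ht h1, key t ht t₂ ht₂ h2⟩
  · have key : ∀ a ∈ I, ∀ b ∈ I, (α a).1 < (α b).1 → b < a := by
      intro a ha b hb h
      by_contra hc
      push_neg at hc
      rcases hc.lt_or_eq with h' | h'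
      · exact absurd (hm ha hb h') (by simp only; linarith)
      · rw [h'] at h; exact lt_irrefl _ h
    exact Or.inr ⟨key t ht t₂ ht₂ h2, key t₁ ht₁ t ht h1⟩

private lemma semi_all (I J : Set ℝ) (α β : ℝ → ℝ × ℝ)
    (hA : ((fun t => (α t).1) '' I).OrdConnected)
    (hB : ((fun s => (β s).1) '' J).OrdConnected)
    (hαL : ∀ t ∈ I, ∀ t' ∈ I, (α t).1 < (α t').1 → |(α t').2 - (α t).2| < (α t').1 - (α t).1)
    (hβL : ∀ s ∈ J, ∀ s' ∈ J, (β s).1 < (β s').1 → |(β s').2 - (β s).2| < (β s').1 - (β s).1)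
    (hmα : StrictMonoOn (fun t => (α t).1) I ∨ StrictAntiOn (fun t => (α t).1) I)
    (hmβ : StrictMonoOn (fun s => (β s).1) J ∨ StrictAntiOn (fun s => (β s).1) J)
    (t₁ t₂ s₁ s₂ : ℝ) (ht₁ : t₁ ∈ I) (ht₂ : t₂ ∈ I) (hs₁ : s₁ ∈ J) (hs₂ : s₂ ∈ J)
    (S1 : |(β s₁).1 - (α t₁).1| < (β s₁).2 - (α t₁).2)
    (S2 : |(β s₂).1 - (α t₂).1| < (α t₂).2 - (β s₂).2) :
    ∃ t ∈ I, ((t₁ < t ∧ t < t₂) ∨ (t₂ < t ∧ t < t₁)) ∧ α t ∈ β '' J := by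
  have hαE := E_of_mono hmα
  have hβE := E_of_mono hmβ
  rcases lt_trichotomy (α t₁).1 (α t₂).1 with h | h | h
  · exact semi_pos I J α β hA hB hαL hβL hαE hβE hmα t₁ t₂ s₁ s₂ ht₁ ht₂ hs₁ hs₂ h S1 S2
  · exfalso
    have hEt : (α t₁).2 = (α t₂).2 := hαE t₁ ht₁ t₂ ht₂ h
    have tri : |(β s₁).1 - (β s₂).1| ≤ |(β s₁).1 - (α t₁).1| + |(α t₁).1 - (β s₂).1| :=
      abs_sub_le _ _ _
    have c1 : |(α t₁).1 - (β s₂).1| = |(β s₂).1 - (α t₂).1| := by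
      rw [abs_sub_comm, h]
    have c2 := param_lip_le hβL hβE s₁ hs₁ s₂ hs₂
    have c3 := le_abs_self ((β s₁).2 - (β s₂).2)
    linarith
  · -- apply to flipped curves with swapped pairs
    have hAf : ((fun t => (fl α t).1) '' I).OrdConnected := hA
    have hBf : ((fun s => (fl β s).1) '' J).OrdConnected := hB
    have hmαf : StrictMonoOn (fun t => (fl α t).1) I ∨ StrictAntiOn (fun t => (fl α t).1) I := hmα
    have hpq' : (fl α t₂).1 < (fl α t₁).1 := h
    have S1' : |(fl β s₂).1 - (fl α t₂).1| < (fl β s₂).2 - (fl α t₂).2 := by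
      show |(β s₂).1 - (α t₂).1| < -(β s₂).2 - -(α t₂).2
      linarith
    have S2' : |(fl β s₁).1 - (fl α t₁).1| < (fl α t₁).2 - (fl β s₁).2 := by
      show |(β s₁).1 - (α t₁).1| < -(α t₁).2 - -(β s₁).2
      linarith
    obtain ⟨t, ht, hor, himg⟩ :=
      semi_pos I J (fl α) (fl β) hAf hBf (fl_L hαL) (fl_L hβL) (fl_E hαE) (fl_E hβE) hmαf
        t₂ t₁ s₂ s₁ ht₂ ht₁ hs₂ hs₁ hpq' S1' S2'
    obtain ⟨s, hs, he⟩ := himg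
    refine ⟨t, ht, ?_, ⟨s, hs, ?_⟩⟩
    · tauto
    · have h1 : (fl β s).1 = (fl α t).1 := congrArg Prod.fst he
      have h2 : (fl β s).2 = (fl α t).2 := congrArg Prod.snd he
      have h1' : (β s).1 = (α t).1 := h1
      have h2' : -(β s).2 = -(α t).2 := h2
      exact Prod.ext h1' (neg_inj.mp h2')

private lemma hasDerivAt_fst' {γ : ℝ → ℝ × ℝ} {v : ℝ × ℝ} {t : ℝ} (h : HasDerivAt γ v t) :
    HasDerivAt (fun t => (γ t).1) v.1 t := by
  exact h.fst

private lemma hasDerivAt_snd' {γ : ℝ → ℝ × ℝ} {v : ℝ × ℝ} {t : ℝ} (h : HasDerivAt γ v t) :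
    HasDerivAt (fun t => (γ t).2) v.2 t := by
  exact h.snd

private lemma curve_props (K : Set ℝ) (hK : K.OrdConnected) (γ γ' : ℝ → ℝ × ℝ)
    (hd : ∀ t ∈ K, HasDerivAt γ (γ' t) t)
    (htl : ∀ t ∈ K, (γ' t).2 ^ 2 < (γ' t).1 ^ 2) :
    (∀ t ∈ K, ∀ t' ∈ K, (γ t).1 < (γ t').1 → |(γ t').2 - (γ t).2| < (γ t').1 - (γ t).1)
    ∧ (StrictMonoOn (fun t => (γ t).1) K ∨ StrictAntiOn (fun t => (γ t).1) K)
    ∧ ((fun t => (γ t).1) '' K).OrdConnected := by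
  have hd1 : ∀ t ∈ K, HasDerivAt (fun t => (γ t).1) ((γ' t).1) t :=
    fun t ht => hasDerivAt_fst' (hd t ht)
  have hd2 : ∀ t ∈ K, HasDerivAt (fun t => (γ t).2) ((γ' t).2) t :=
    fun t ht => hasDerivAt_snd' (hd t ht)
  have habs : ∀ t ∈ K, |(γ' t).2| < |(γ' t).1| := fun t ht => sq_lt_sq.mp (htl t ht)
  have hconv : Convex ℝ K := convex_iff_ordConnected.mpr hK
  have hne : ∀ t ∈ K, (γ' t).1 ≠ 0 := by
    intro t ht h0
    have h1 := htl t ht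
    rw [h0] at h1
    nlinarith [sq_nonneg (γ' t).2]
  have hsgn : (∀ t ∈ K, 0 < (γ' t).1) ∨ (∀ t ∈ K, (γ' t).1 < 0) := by
    by_cases hp : ∀ t ∈ K, 0 < (γ' t).1
    · exact Or.inl hp
    · push_neg at hp
      obtain ⟨a, ha, hle⟩ := hp
      have hneg : (γ' a).1 < 0 := lt_of_le_of_ne hle (hne a ha)
      right
      intro b hb
      by_contra hcon
      push_neg at hcon
      have hpos : 0 < (γ' b).1 := lt_of_le_of_ne hcon (Ne.symm (hne b hb))
      have himg : ((fun t => (γ' t).1) '' K).OrdConnected :=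
        hK.image_hasDerivWithinAt (f := fun t => (γ t).1)
          (fun x hx => (hd1 x hx).hasDerivWithinAt)
      have h0 : (0:ℝ) ∈ (fun t => (γ' t).1) '' K :=
        himg.out ⟨a, ha, rfl⟩ ⟨b, hb, rfl⟩ ⟨hneg.le, hpos.le⟩
      obtain ⟨c, hc, hc0⟩ := h0
      exact hne c hc hc0
  have hcont1 : ContinuousOn (fun t => (γ t).1) K :=
    fun t ht => ((hd1 t ht).continuousAt).continuousWithinAt
  have combo : ∀ c : ℝ, (∀ t ∈ K, 0 < (γ' t).1 + c * (γ' t).2) →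
      StrictMonoOn (fun t => (γ t).1 + c * (γ t).2) K := by
    intro c hc
    apply strictMonoOn_of_deriv_pos hconv
    · exact fun t ht =>
        (((hd1 t ht).add ((hd2 t ht).const_mul c)).continuousAt).continuousWithinAt
    · intro x hx
      have hxK : x ∈ K := interior_subset hx
      have hD : HasDerivAt (fun t => (γ t).1 + c * (γ t).2) ((γ' x).1 + c * (γ' x).2) x :=
        (hd1 x hxK).add ((hd2 x hxK).const_mul c)
      rw [hD.deriv]
      exact hc x hxK
  have combo' : ∀ c : ℝ, (∀ t ∈ K, (γ' t).1 + c * (γ' t).2 < 0) →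
      StrictAntiOn (fun t => (γ t).1 + c * (γ t).2) K := by
    intro c hc
    apply strictAntiOn_of_deriv_neg hconv
    · exact fun t ht =>
        (((hd1 t ht).add ((hd2 t ht).const_mul c)).continuousAt).continuousWithinAt
    · intro x hx
      have hxK : x ∈ K := interior_subset hx
      have hD : HasDerivAt (fun t => (γ t).1 + c * (γ t).2) ((γ' x).1 + c * (γ' x).2) x :=
        (hd1 x hxK).add ((hd2 x hxK).const_mul c)
      rw [hD.deriv]
      exact hc x hxK
  have himg : ((fun t => (γ t).1) '' K).OrdConnected := by
    rw [Set.ordConnected_iff]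
    rintro x ⟨a, ha, rfl⟩ y ⟨b, hb, rfl⟩ hxy z hz
    rcases le_total a b with hab | hab
    · have hsub' : Icc a b ⊆ K := hK.out ha hb
      obtain ⟨c, hc, hcz⟩ := intermediate_value_Icc hab (hcont1.mono hsub') hz
      exact ⟨c, hsub' hc, hcz⟩
    · have hsub' : Icc b a ⊆ K := hK.out hb ha
      obtain ⟨c, hc, hcz⟩ := intermediate_value_Icc' hab (hcont1.mono hsub') hz
      exact ⟨c, hsub' hc, hcz⟩
  rcases hsgn with hpos | hneg
  · have m1 : StrictMonoOn (fun t => (γ t).1 + 1 * (γ t).2) K := by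
      apply combo
      intro t ht
      have h1 := habs t ht
      have h2 := abs_of_pos (hpos t ht)
      have h3 := neg_abs_le (γ' t).2
      linarith
    have m2 : StrictMonoOn (fun t => (γ t).1 + (-1) * (γ t).2) K := by
      apply combo
      intro t ht
      have h1 := habs t ht
      have h2 := abs_of_pos (hpos t ht)
      have h3 := le_abs_self (γ' t).2
      linarith
    have hmono : StrictMonoOn (fun t => (γ t).1) K := by
      intro t ht t' ht' hlt
      have h1 := m1 ht ht' hlt
      have h2 := m2 ht ht' hlt
      simp only at h1 h2 ⊢
      linarith
    refine ⟨?_, Or.inl hmono, himg⟩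
    intro t ht t' ht' hlt
    have hts : t < t' := by
      by_contra hc
      push_neg at hc
      rcases hc.lt_or_eq with h' | h'
      · exact absurd (hmono ht' ht h') (by simp only; linarith)
      · rw [h'] at hlt; exact lt_irrefl _ hlt
    have h1 := m1 ht ht' hts
    have h2 := m2 ht ht' hts
    simp only at h1 h2
    rw [abs_lt]
    constructor <;> linarith
  · have m1 : StrictAntiOn (fun t => (γ t).1 + 1 * (γ t).2) K := by
      apply combo'
      intro t ht
      have h1 := habs t ht
      have h2 := abs_of_neg (hneg t ht)
      have h3 := le_abs_self (γ' t).2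
      linarith
    have m2 : StrictAntiOn (fun t => (γ t).1 + (-1) * (γ t).2) K := by
      apply combo'
      intro t ht
      have h1 := habs t ht
      have h2 := abs_of_neg (hneg t ht)
      have h3 := neg_abs_le (γ' t).2
      linarith
    have hanti : StrictAntiOn (fun t => (γ t).1) K := by
      intro t ht t' ht' hlt
      have h1 := m1 ht ht' hlt
      have h2 := m2 ht ht' hlt
      simp only at h1 h2 ⊢
      linarith
    refine ⟨?_, Or.inr hanti, himg⟩
    intro t ht t' ht' hlt
    have hts : t' < t := by
      by_contra hc
      push_neg at hc
      rcases hc.lt_or_eq with h' | h'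
      · exact absurd (hanti ht ht' h') (by simp only; linarith)
      · rw [← h'] at hlt; exact lt_irrefl _ hlt
    have h1 := m1 ht' ht hts
    have h2 := m2 ht' ht hts
    simp only at h1 h2
    rw [abs_lt]
    constructor <;> linarith

/-- Crossing lemma for two planar timelike curves. -/
theorem timelike_curves_crossing (I J : Set ℝ)
    (hI : I.OrdConnected) (hI2 : ∃ x ∈ I, ∃ y ∈ I, x ≠ y)
    (hJ : J.OrdConnected) (hJ2 : ∃ x ∈ J, ∃ y ∈ J, x ≠ y)
    (α α' β β' : ℝ → ℝ × ℝ)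
    (hα : ∀ t ∈ I, HasDerivAt α (α' t) t)
    (hβ : ∀ t ∈ J, HasDerivAt β (β' t) t)
    (htlα : ∀ t ∈ I, (α' t).2 ^ 2 < (α' t).1 ^ 2)
    (htlβ : ∀ t ∈ J, (β' t).2 ^ 2 < (β' t).1 ^ 2)
    (t₁ t₂ s₁ s₂ : ℝ) (ht₁ : t₁ ∈ I) (ht₂ : t₂ ∈ I) (hs₁ : s₁ ∈ J) (hs₂ : s₂ ∈ J)
    (hsp1 : ((β s₁).1 - (α t₁).1) ^ 2 < ((β s₁).2 - (α t₁).2) ^ 2)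
    (hsp2 : ((β s₂).1 - (α t₂).1) ^ 2 < ((β s₂).2 - (α t₂).2) ^ 2)
    (hdir : ((β s₁).2 - (α t₁).2) * ((α t₂).2 - (β s₂).2) > 0) :
    ∃ t ∈ I, ((t₁ < t ∧ t < t₂) ∨ (t₂ < t ∧ t < t₁)) ∧ α t ∈ β '' J := by
  obtain ⟨hαL, hmα, hA⟩ := curve_props I hI α α' hα htlα
  obtain ⟨hβL, hmβ, hB⟩ := curve_props J hJ β β' hβ htlβ
  have habs1 : |(β s₁).1 - (α t₁).1| < |(β s₁).2 - (α t₁).2| := sq_lt_sq.mp hsp1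
  have habs2 : |(β s₂).1 - (α t₂).1| < |(β s₂).2 - (α t₂).2| := sq_lt_sq.mp hsp2
  rcases mul_pos_iff.mp hdir with ⟨hx1, hx2⟩ | ⟨hx1, hx2⟩
  · -- β is spatially above α at the first pair, below at the second pair
    have S1 : |(β s₁).1 - (α t₁).1| < (β s₁).2 - (α t₁).2 := by
      rwa [abs_of_pos hx1] at habs1
    have S2 : |(β s₂).1 - (α t₂).1| < (α t₂).2 - (β s₂).2 := by
      rw [abs_of_neg (by linarith : (β s₂).2 - (α t₂).2 < 0)] at habs2
      linarith
    exact semi_all I J α β hA hB hαL hβL hmα hmβ t₁ t₂ s₁ s₂ ht₁ ht₂ hs₁ hs₂ S1 S2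
  · -- flip the spatial direction
    have hAf : ((fun t => (fl α t).1) '' I).OrdConnected := hA
    have hBf : ((fun s => (fl β s).1) '' J).OrdConnected := hB
    have hmαf : StrictMonoOn (fun t => (fl α t).1) I ∨ StrictAntiOn (fun t => (fl α t).1) I := hmα
    have hmβf : StrictMonoOn (fun s => (fl β s).1) J ∨ StrictAntiOn (fun s => (fl β s).1) J := hmβ
    have S1 : |(fl β s₁).1 - (fl α t₁).1| < (fl β s₁).2 - (fl α t₁).2 := by
      show |(β s₁).1 - (α t₁).1| < -(β s₁).2 - -(α t₁).2
      rw [abs_of_neg (by linarith : (β s₁).2 - (α t₁).2 < 0)] at habs1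
      linarith
    have S2 : |(fl β s₂).1 - (fl α t₂).1| < (fl α t₂).2 - (fl β s₂).2 := by
      show |(β s₂).1 - (α t₂).1| < -(α t₂).2 - -(β s₂).2
      rw [abs_of_pos (by linarith : (0:ℝ) < (β s₂).2 - (α t₂).2)] at habs2
      linarith
    obtain ⟨t, ht, hor, himg⟩ :=
      semi_all I J (fl α) (fl β) hAf hBf (fl_L hαL) (fl_L hβL) hmαf hmβf
        t₁ t₂ s₁ s₂ ht₁ ht₂ hs₁ hs₂ S1 S2
    obtain ⟨s, hs, he⟩ := himg
    refine ⟨t, ht, hor, ⟨s, hs, ?_⟩⟩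
    have h1 : (fl β s).1 = (fl α t).1 := congrArg Prod.fst he
    have h2 : (fl β s).2 = (fl α t).2 := congrArg Prod.snd he
    have h1' : (β s).1 = (α t).1 := h1
    have h2' : -(β s).2 = -(α t).2 := h2
    exact Prod.ext h1' (neg_inj.mp h2')
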